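/- arXiv:1702.06171 — 2 statements merged into one kernel-verified Lean document; each statement's English description precedes it below -/
import Mathlib

section
/- Let b be a polynomial Blaschke–Potapov product of degree m on ℂⁿ and W = b·H₊ ⊆ H₊. Then the orthogonal complement W^⊥ of W in H₊ consists only of ℂⁿ-valued polynomials of degree at most m − 1; in particular W^⊥ is finite dimensional with dim W^⊥ ≤ nm. -/
open Matrix
open scoped InnerProductSpace

noncomputable def projMat {n : ℕ} (α : Submodule ℂ (EuclideanSpace ℂ (Fin n))) :
    Matrix (Fin n) (Fin n) ℂ :=
  LinearMap.toMatrix (EuclideanSpace.basisFun (Fin n) ℂ).toBasis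
    (EuclideanSpace.basisFun (Fin n) ℂ).toBasis
    ((α.subtypeL.comp α.orthogonalProjectionOnto) : _ →L[ℂ] _).toLinearMap

/-- Blaschke–Potapov factor `π_α + λ π_α^⊥`. -/
noncomputable def BPfac {n : ℕ} (α : Submodule ℂ (EuclideanSpace ℂ (Fin n))) (lam : ℂ) :
    Matrix (Fin n) (Fin n) ℂ :=
  projMat α + lam • (1 - projMat α)
/-- Polynomial Blaschke–Potapov product `∏_j (π_{α_j} + λ π_{α_j}^⊥)` (in the given order). -/
noncomputable def BPProd {n m : ℕ} (α : Fin m → Submodule ℂ (EuclideanSpace ℂ (Fin n)))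
    (lam : ℂ) : Matrix (Fin n) (Fin n) ℂ :=
  (List.ofFn fun j => BPfac (α j) lam).prod
/-- The Hardy space H₊ of ℂⁿ-valued functions on the circle, identified with the
ℓ²-space of sequences of Fourier coefficients. -/
noncomputable abbrev Hp (n : ℕ) := lp (fun _ : ℕ => EuclideanSpace ℂ (Fin n)) 2

/-- The sequence of Fourier coefficients of `b·g`, where `b` is the matrix polynomial
with coefficients `c 0, …, c m` and `g` has Fourier coefficients `g 0, g 1, …`. -/
noncomputable def mulBP {n m : ℕ} (c : Fin (m + 1) → Matrix (Fin n) (Fin n) ℂ)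
    (g : ℕ → EuclideanSpace ℂ (Fin n)) (k : ℕ) : EuclideanSpace ℂ (Fin n) :=
  ∑ j : Fin (m + 1), if (j : ℕ) ≤ k then WithLp.toLp 2 ((c j).mulVec (g ((k - j : ℕ)))) else 0

namespace Stmt6Aux

variable {n : ℕ}

lemma projMat_idem (α : Submodule ℂ (EuclideanSpace ℂ (Fin n))) :
    projMat α * projMat α = projMat α := by
  unfold projMat
  rw [← LinearMap.toMatrix_comp _ (EuclideanSpace.basisFun (Fin n) ℂ).toBasis]
  congr 1
  apply LinearMap.ext
  intro x
  simp [Submodule.orthogonalProjectionOnto_mem_subspace_eq_self, Submodule.starProjection_eq_self_iff]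

lemma projMat_herm (α : Submodule ℂ (EuclideanSpace ℂ (Fin n))) :
    (projMat α)ᴴ = projMat α := by
  unfold projMat
  rw [← LinearMap.toMatrix_adjoint]
  congr 1
  have h : LinearMap.IsSymmetric
      ((α.subtypeL.comp α.orthogonalProjectionOnto : _ →L[ℂ] _) :
        EuclideanSpace ℂ (Fin n) →ₗ[ℂ] EuclideanSpace ℂ (Fin n)) :=
    α.starProjection_isSymmetric
  have h2 := (LinearMap.isSymmetric_iff_isSelfAdjoint _).mp h
  rw [← LinearMap.star_eq_adjoint]
  exact h2

noncomputable def facZ (β : Submodule ℂ (EuclideanSpace ℂ (Fin n))) (lam : ℂ) :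
    Matrix (Fin n) (Fin n) ℂ := lam • projMat β + (1 - projMat β)

lemma BPfac_mul_facZ (β : Submodule ℂ (EuclideanSpace ℂ (Fin n))) (lam : ℂ) :
    BPfac β lam * facZ β lam = lam • 1 := by
  have hP := projMat_idem β
  set P := projMat β with hPdef
  have h1 : (1 - P) * P = 0 := by rw [sub_mul, one_mul, hP, sub_self]
  have h2 : P * (1 - P) = 0 := by rw [mul_sub, mul_one, hP, sub_self]
  have h3 : (1 - P) * (1 - P) = 1 - P := by rw [sub_mul, one_mul, h2, sub_zero]
  unfold BPfac facZ
  rw [add_mul, mul_add, mul_add, mul_smul_comm, hP, h2, smul_mul_assoc, smul_mul_assoc,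
    mul_smul_comm, smul_smul, h1, h3, smul_zero, add_zero, zero_add, ← smul_add,
    add_sub_cancel]

noncomputable def AchkL {m : ℕ} (α : Fin m → Submodule ℂ (EuclideanSpace ℂ (Fin n)))
    (lam : ℂ) : Matrix (Fin n) (Fin n) ℂ :=
  (List.ofFn fun j => facZ (α j) lam).reverse.prod

lemma BPProd_mul_Achk {m : ℕ} (α : Fin m → Submodule ℂ (EuclideanSpace ℂ (Fin n))) (lam : ℂ) :
    BPProd α lam * AchkL α lam = lam ^ m • (1 : Matrix (Fin n) (Fin n) ℂ) := by
  induction m with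
  | zero => simp [BPProd, AchkL]
  | succ m ih =>
    rw [BPProd, AchkL, List.ofFn_succ, List.ofFn_succ, List.reverse_cons, List.prod_cons,
      List.prod_append, List.prod_singleton]
    have hIH := ih (fun i => α i.succ)
    rw [mul_assoc, ← mul_assoc (List.ofFn fun i => BPfac (α i.succ) lam).prod]
    rw [show ((List.ofFn fun i => BPfac (α i.succ) lam).prod *
        (List.ofFn fun i => facZ (α i.succ) lam).reverse.prod) = lam ^ m • 1 from hIH]
    rw [smul_mul_assoc, one_mul, mul_smul_comm, BPfac_mul_facZ, smul_smul, pow_succ]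

lemma Achk_eq_smul_conj {m : ℕ} (α : Fin m → Submodule ℂ (EuclideanSpace ℂ (Fin n)))
    {lam : ℂ} (hlam : lam ≠ 0) :
    AchkL α lam = lam ^ m • (BPProd α ((starRingEnd ℂ) lam)⁻¹)ᴴ := by
  induction m with
  | zero => simp [BPProd, AchkL]
  | succ m ih =>
    rw [BPProd, AchkL, List.ofFn_succ, List.ofFn_succ, List.reverse_cons, List.prod_cons,
      List.prod_append, List.prod_singleton, conjTranspose_mul]
    have hIH := ih (fun i => α i.succ)
    rw [AchkL, BPProd] at hIH
    have hfac : (BPfac (α 0) ((starRingEnd ℂ) lam)⁻¹)ᴴ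
        = projMat (α 0) + lam⁻¹ • (1 - projMat (α 0)) := by
      rw [BPfac, conjTranspose_add, conjTranspose_smul, conjTranspose_sub, conjTranspose_one,
        projMat_herm]
      congr 1
      rw [starRingEnd_apply, star_inv₀, star_star]
    rw [hfac, pow_succ, ← smul_mul_smul_comm, ← hIH]
    congr 1
    rw [smul_add, smul_smul, mul_inv_cancel₀ hlam, one_smul, facZ]

lemma Achk_poly {m : ℕ} (α : Fin m → Submodule ℂ (EuclideanSpace ℂ (Fin n)))
    (c : Fin (m + 1) → Matrix (Fin n) (Fin n) ℂ)
    (hc : ∀ lam : ℂ, BPProd α lam = ∑ k : Fin (m + 1), lam ^ (k : ℕ) • c k)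
    {lam : ℂ} (hlam : lam ≠ 0) :
    AchkL α lam = ∑ j : Fin (m + 1), lam ^ (j : ℕ) • (c (Fin.rev j))ᴴ := by
  rw [Achk_eq_smul_conj α hlam, hc]
  have hct : (∑ k : Fin (m + 1), ((starRingEnd ℂ) lam)⁻¹ ^ (k : ℕ) • c k)ᴴ
      = ∑ k : Fin (m + 1), (lam⁻¹) ^ (k : ℕ) • (c k)ᴴ := by
    rw [conjTranspose_sum]
    refine Finset.sum_congr rfl fun k _ => ?_
    rw [conjTranspose_smul]
    congr 1
    rw [starRingEnd_apply, star_pow, star_inv₀, star_star]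
  rw [hct, Finset.smul_sum]
  have hterm : ∀ k : Fin (m + 1), lam ^ m • (lam⁻¹) ^ (k : ℕ) • (c k)ᴴ
      = lam ^ (m - (k : ℕ)) • (c k)ᴴ := by
    intro k
    have hkm : (k : ℕ) ≤ m := Nat.lt_succ_iff.mp k.isLt
    rw [smul_smul]
    congr 1
    rw [inv_pow, ← div_eq_mul_inv]
    exact (pow_sub₀ _ hlam hkm).symm
  rw [Finset.sum_congr rfl fun k _ => hterm k]
  refine Fintype.sum_bijective Fin.rev Fin.rev_bijective _ _ fun j => ?_
  have hj : (j : ℕ) ≤ m := Nat.lt_succ_iff.mp j.isLt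
  rw [Fin.rev_rev]
  congr 2
  rw [Fin.val_rev]
  omega

noncomputable def Ecoef {m : ℕ} (c : Fin (m + 1) → Matrix (Fin n) (Fin n) ℂ) (s : ℕ) :
    Matrix (Fin n) (Fin n) ℂ :=
  ∑ p ∈ Finset.univ.filter (fun p : Fin (m + 1) × Fin (m + 1) => (p.1 : ℕ) + (p.2 : ℕ) = s),
    c p.1 * (c (Fin.rev p.2))ᴴ

lemma Ecoef_eq {m : ℕ} (α : Fin m → Submodule ℂ (EuclideanSpace ℂ (Fin n)))
    (c : Fin (m + 1) → Matrix (Fin n) (Fin n) ℂ)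
    (hc : ∀ lam : ℂ, BPProd α lam = ∑ k : Fin (m + 1), lam ^ (k : ℕ) • c k)
    (s : ℕ) : Ecoef c s = if s = m then 1 else 0 := by
  have key : ∀ lam : ℂ, lam ≠ 0 →
      (∑ k : Fin (m + 1), lam ^ (k : ℕ) • c k) *
        (∑ j : Fin (m + 1), lam ^ (j : ℕ) • (c (Fin.rev j))ᴴ)
      = lam ^ m • (1 : Matrix (Fin n) (Fin n) ℂ) := by
    intro lam hlam
    rw [← hc, ← Achk_poly α c hc hlam, BPProd_mul_Achk]
  ext i0 j0
  set P : Polynomial ℂ := ∑ p : Fin (m + 1) × Fin (m + 1),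
    Polynomial.monomial ((p.1 : ℕ) + (p.2 : ℕ)) ((c p.1 * (c (Fin.rev p.2))ᴴ) i0 j0) with hP
  set Q : Polynomial ℂ := Polynomial.monomial m ((1 : Matrix (Fin n) (Fin n) ℂ) i0 j0) with hQ
  have hPQ : P = Q := by
    apply Polynomial.eq_of_infinite_eval_eq
    refine Set.Infinite.mono ?_ (Set.Finite.infinite_compl (Set.finite_singleton (0 : ℂ)))
    intro lam hlam
    simp only [Set.mem_compl_iff, Set.mem_singleton_iff] at hlam
    simp only [Set.mem_setOf_eq]
    have h1 : P.eval lam = ((∑ k : Fin (m + 1), lam ^ (k : ℕ) • c k) *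
        (∑ j : Fin (m + 1), lam ^ (j : ℕ) • (c (Fin.rev j))ᴴ)) i0 j0 := by
      rw [Finset.sum_mul_sum]
      rw [hP, Polynomial.eval_finset_sum]
      rw [Fintype.sum_prod_type]
      rw [Matrix.sum_apply]
      refine Finset.sum_congr rfl fun a _ => ?_
      rw [Matrix.sum_apply]
      refine Finset.sum_congr rfl fun b _ => ?_
      rw [Polynomial.eval_monomial, smul_mul_smul_comm, Matrix.smul_apply, smul_eq_mul,
        pow_add]
      ring
    have h2 : Q.eval lam = (lam ^ m • (1 : Matrix (Fin n) (Fin n) ℂ)) i0 j0 := by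
      rw [hQ, Polynomial.eval_monomial, Matrix.smul_apply, smul_eq_mul]
      ring
    rw [h1, h2, key lam hlam]
  have hco := congrArg (fun p : Polynomial ℂ => p.coeff s) hPQ
  simp only [hP, hQ, Polynomial.finset_sum_coeff, Polynomial.coeff_monomial] at hco
  rw [Ecoef, Matrix.sum_apply, Finset.sum_filter, hco]
  by_cases h : s = m
  · subst h
    simp
  · rw [if_neg (fun hh : m = s => h hh.symm), if_neg h]
    simp

lemma euclid_sum_apply {ι : Type*} (s : Finset ι) (w : ι → EuclideanSpace ℂ (Fin n))
    (i : Fin n) : (∑ b ∈ s, w b) i = ∑ b ∈ s, w b i := by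
  classical
  induction s using Finset.cons_induction with
  | empty => simp
  | cons a s ha ih =>
    rw [Finset.sum_cons, Finset.sum_cons, PiLp.add_apply, ih]

lemma mulVec_sum' {ι : Type*} (s : Finset ι) (A : Matrix (Fin n) (Fin n) ℂ)
    (v : ι → EuclideanSpace ℂ (Fin n)) :
    (WithLp.toLp 2 (A.mulVec (∑ j ∈ s, v j)) : EuclideanSpace ℂ (Fin n))
      = ∑ j ∈ s, (WithLp.toLp 2 (A.mulVec (v j)) : EuclideanSpace ℂ (Fin n)) := by
  classical
  induction s using Finset.cons_induction with
  | empty => simp [Matrix.mulVec_zero]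
  | cons a s ha ih =>
    rw [Finset.sum_cons, Finset.sum_cons, ← ih, Matrix.mulVec_add, WithLp.toLp_add]

lemma sum_mulVec' {ι : Type*} (s : Finset ι) (M : ι → Matrix (Fin n) (Fin n) ℂ)
    (v : EuclideanSpace ℂ (Fin n)) :
    (WithLp.toLp 2 ((∑ p ∈ s, M p).mulVec v) : EuclideanSpace ℂ (Fin n))
      = ∑ p ∈ s, (WithLp.toLp 2 ((M p).mulVec v) : EuclideanSpace ℂ (Fin n)) := by
  classical
  induction s using Finset.cons_induction with
  | empty => simp [Matrix.zero_mulVec]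
  | cons a s ha ih =>
    rw [Finset.sum_cons, Finset.sum_cons, ← ih, Matrix.add_mulVec, WithLp.toLp_add]

lemma inner_mulVec_aux (A : Matrix (Fin n) (Fin n) ℂ) (x y : EuclideanSpace ℂ (Fin n)) :
    @inner ℂ (EuclideanSpace ℂ (Fin n)) _ x (WithLp.toLp 2 (A.mulVec y))
      = @inner ℂ (EuclideanSpace ℂ (Fin n)) _ (WithLp.toLp 2 (Aᴴ.mulVec x)) y := by
  simp only [PiLp.inner_apply, RCLike.inner_apply, Matrix.mulVec, dotProduct, PiLp.toLp_apply,
    Matrix.conjTranspose_apply]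
  simp only [mul_comm _ ((starRingEnd ℂ) _)]
  calc ∑ i, (starRingEnd ℂ) (x i) * ∑ j, A i j * y j
      = ∑ i, ∑ j, (starRingEnd ℂ) (x i) * (A i j * y j) := by
        refine Finset.sum_congr rfl fun i _ => ?_
        rw [Finset.mul_sum]
    _ = ∑ j, ∑ i, (starRingEnd ℂ) (x i) * (A i j * y j) := Finset.sum_comm
    _ = ∑ j, (starRingEnd ℂ) (∑ i, (starRingEnd ℂ) (A i j) * x i) * y j := by
        refine Finset.sum_congr rfl fun j _ => ?_
        rw [map_sum, Finset.sum_mul]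
        refine Finset.sum_congr rfl fun i _ => ?_
        rw [_root_.map_mul, Complex.conj_conj]
        ring

lemma single_apply' (i : ℕ) (a : EuclideanSpace ℂ (Fin n)) (j : ℕ) :
    (lp.single (E := fun _ : ℕ => EuclideanSpace ℂ (Fin n)) 2 i a) j
      = if j = i then a else 0 := by
  rw [lp.single_apply]
  by_cases h : j = i
  · subst h
    simp
  · simp [h]

lemma basis_expand (x : EuclideanSpace ℂ (Fin n)) :
    ∑ b : Fin n, x b • EuclideanSpace.single b (1 : ℂ) = x := by
  ext i
  rw [euclid_sum_apply]
  simp [EuclideanSpace.single_apply, mul_ite, Finset.sum_ite_eq]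

end Stmt6Aux

set_option maxHeartbeats 1000000 in
/-- The orthogonal complement of W = b·H₊ in H₊ consists of polynomials of degree at
most m − 1; in particular it has dimension at most n·m. -/
theorem stmt6 {n m : ℕ} (α : Fin m → Submodule ℂ (EuclideanSpace ℂ (Fin n)))
    (c : Fin (m + 1) → Matrix (Fin n) (Fin n) ℂ)
    (hc : ∀ lam : ℂ, BPProd α lam = ∑ k : Fin (m + 1), lam ^ (k : ℕ) • c k)
    (W : Set (Hp n))
    (hW : W = {f : Hp n | ∃ g : Hp n, ∀ k : ℕ,
      (f k : EuclideanSpace ℂ (Fin n)) = mulBP c (fun j => g j) k}) :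
    (∀ f : Hp n, (∀ g ∈ W, ⟪f, g⟫_ℂ = 0) →
      ∀ k : ℕ, m ≤ k → (f k : EuclideanSpace ℂ (Fin n)) = 0) ∧
    ∃ s : Finset (Hp n), s.card ≤ n * m ∧
      ∀ f : Hp n, (∀ g ∈ W, ⟪f, g⟫_ℂ = 0) → f ∈ Submodule.span ℂ (s : Set (Hp n)) := by
  classical
  have part1 : ∀ f : Hp n, (∀ g ∈ W, ⟪f, g⟫_ℂ = 0) →
      ∀ k : ℕ, m ≤ k → (f k : EuclideanSpace ℂ (Fin n)) = 0 := by
    intro f hf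
    set F : ℕ → EuclideanSpace ℂ (Fin n) := fun j => (f j : EuclideanSpace ℂ (Fin n)) with hFdef
    have hF : ∀ l : ℕ,
        (∑ j : Fin (m + 1), (WithLp.toLp 2 ((c j)ᴴ.mulVec (F (l + (j : ℕ)))) : EuclideanSpace ℂ (Fin n))) = 0 := by
      intro l
      have key : ∀ e : EuclideanSpace ℂ (Fin n),
          @inner ℂ (EuclideanSpace ℂ (Fin n)) _
            (∑ j : Fin (m + 1), (WithLp.toLp 2 ((c j)ᴴ.mulVec (F (l + (j : ℕ)))) : EuclideanSpace ℂ (Fin n)))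
            e = 0 := by
        intro e
        have hmem : (∑ j : Fin (m + 1),
            lp.single 2 (l + (j : ℕ)) (WithLp.toLp 2 ((c j).mulVec e) : EuclideanSpace ℂ (Fin n)) : Hp n) ∈ W := by
          rw [hW]
          refine ⟨lp.single 2 l e, fun k => ?_⟩
          rw [lp.coeFn_sum, Finset.sum_apply]
          unfold mulBP
          refine Finset.sum_congr rfl fun j _ => ?_
          simp only [Stmt6Aux.single_apply']
          by_cases h1 : k = l + (j : ℕ)
          · rw [if_pos h1, if_pos (by omega), if_pos (by omega)]
          · rw [if_neg h1]
            by_cases h2 : (j : ℕ) ≤ k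
            · rw [if_pos h2, if_neg (by omega), WithLp.ofLp_zero, Matrix.mulVec_zero, WithLp.toLp_zero]
            · rw [if_neg h2]
        have h0 := hf _ hmem
        rw [inner_sum] at h0
        simp only [lp.inner_single_right] at h0
        rw [sum_inner, ← h0]
        refine Finset.sum_congr rfl fun j _ => ?_
        exact (Stmt6Aux.inner_mulVec_aux (c j) (F (l + (j : ℕ))) e).symm
      have h2 := key
        (∑ j : Fin (m + 1), (WithLp.toLp 2 ((c j)ᴴ.mulVec (F (l + (j : ℕ)))) : EuclideanSpace ℂ (Fin n)))
      exact (@inner_self_eq_zero ℂ (EuclideanSpace ℂ (Fin n)) _ _ _).mp h2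
    intro k hk
    set d : Fin (m + 1) → Matrix (Fin n) (Fin n) ℂ := fun j => (c (Fin.rev j))ᴴ with hd
    have hq : ∀ r : ℕ, m ≤ r → mulBP d F r = 0 := by
      intro r hr
      unfold mulBP
      have hall : ∀ j : Fin (m + 1), (j : ℕ) ≤ r :=
        fun j => le_trans (Nat.lt_succ_iff.mp j.isLt) hr
      rw [Finset.sum_congr rfl fun j _ => if_pos (hall j), ← hF (r - m)]
      refine (Fintype.sum_bijective Fin.rev Fin.rev_bijective _ _ fun x => ?_).symm
      have hx : (x : ℕ) ≤ m := Nat.lt_succ_iff.mp x.isLt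
      have harith : r - m + (x : ℕ) = r - (Fin.rev x : ℕ) := by
        rw [Fin.val_rev]
        omega
      rw [hd, harith]
      simp only [Fin.rev_rev]
    have hS : (∑ i : Fin (m + 1),
        (WithLp.toLp 2 ((c i).mulVec (mulBP d F (k + m - (i : ℕ)))) : EuclideanSpace ℂ (Fin n))) = 0 := by
      refine Finset.sum_eq_zero fun i _ => ?_
      have hi : (i : ℕ) ≤ m := Nat.lt_succ_iff.mp i.isLt
      rw [hq (k + m - (i : ℕ)) (by omega)]
      rw [WithLp.ofLp_zero, Matrix.mulVec_zero, WithLp.toLp_zero]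
    have hexp : (∑ i : Fin (m + 1),
        (WithLp.toLp 2 ((c i).mulVec (mulBP d F (k + m - (i : ℕ)))) : EuclideanSpace ℂ (Fin n))) = F k := by
      calc ∑ i : Fin (m + 1), (WithLp.toLp 2 ((c i).mulVec (mulBP d F (k + m - (i : ℕ)))) : EuclideanSpace ℂ (Fin n))
          = ∑ i : Fin (m + 1), ∑ j : Fin (m + 1),
              (WithLp.toLp 2 ((c i * d j).mulVec (F (k + m - ((i : ℕ) + (j : ℕ))))) : EuclideanSpace ℂ (Fin n)) := by
            refine Finset.sum_congr rfl fun i _ => ?_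
            have hi : (i : ℕ) ≤ m := Nat.lt_succ_iff.mp i.isLt
            unfold mulBP
            rw [WithLp.ofLp_sum, Stmt6Aux.mulVec_sum']
            refine Finset.sum_congr rfl fun j _ => ?_
            have hj : (j : ℕ) ≤ m := Nat.lt_succ_iff.mp j.isLt
            rw [if_pos (by omega : (j : ℕ) ≤ k + m - (i : ℕ))]
            rw [WithLp.ofLp_toLp, Matrix.mulVec_mulVec]
            have harith : k + m - (i : ℕ) - (j : ℕ) = k + m - ((i : ℕ) + (j : ℕ)) := by omega
            rw [harith]
        _ = ∑ p : Fin (m + 1) × Fin (m + 1),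
              (WithLp.toLp 2 ((c p.1 * d p.2).mulVec (F (k + m - ((p.1 : ℕ) + (p.2 : ℕ))))) : EuclideanSpace ℂ (Fin n)) :=
            (Fintype.sum_prod_type (fun p : Fin (m + 1) × Fin (m + 1) =>
              (WithLp.toLp 2 ((c p.1 * d p.2).mulVec (F (k + m - ((p.1 : ℕ) + (p.2 : ℕ))))) : EuclideanSpace ℂ (Fin n)))).symm
        _ = ∑ t ∈ Finset.range (m + m + 1),
              ∑ p ∈ Finset.univ.filter
                (fun p : Fin (m + 1) × Fin (m + 1) => (p.1 : ℕ) + (p.2 : ℕ) = t),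
              (WithLp.toLp 2 ((c p.1 * d p.2).mulVec (F (k + m - ((p.1 : ℕ) + (p.2 : ℕ))))) : EuclideanSpace ℂ (Fin n)) := by
            refine (Finset.sum_fiberwise_of_maps_to (fun p _ => ?_)
              (fun p : Fin (m + 1) × Fin (m + 1) =>
                (WithLp.toLp 2 ((c p.1 * d p.2).mulVec (F (k + m - ((p.1 : ℕ) + (p.2 : ℕ))))) : EuclideanSpace ℂ (Fin n)))).symm
            have h1 : (p.1 : ℕ) ≤ m := Nat.lt_succ_iff.mp p.1.isLt
            have h2 : (p.2 : ℕ) ≤ m := Nat.lt_succ_iff.mp p.2.isLt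
            exact Finset.mem_range.mpr (by omega)
        _ = ∑ t ∈ Finset.range (m + m + 1),
              (WithLp.toLp 2 ((Stmt6Aux.Ecoef c t).mulVec (F (k + m - t))) : EuclideanSpace ℂ (Fin n)) := by
            refine Finset.sum_congr rfl fun t _ => ?_
            rw [Stmt6Aux.Ecoef, Stmt6Aux.sum_mulVec']
            refine Finset.sum_congr rfl fun p hp => ?_
            have hps : (p.1 : ℕ) + (p.2 : ℕ) = t := (Finset.mem_filter.mp hp).2
            rw [hd, hps]
        _ = ∑ t ∈ Finset.range (m + m + 1), (if t = m then F k else 0) := by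
            refine Finset.sum_congr rfl fun t _ => ?_
            rw [Stmt6Aux.Ecoef_eq α c hc t]
            by_cases h : t = m
            · rw [if_pos h, if_pos h]
              have harith : k + m - t = k := by omega
              rw [harith]
              rw [Matrix.one_mulVec, WithLp.toLp_ofLp]
            · rw [if_neg h, if_neg h]
              rw [Matrix.zero_mulVec, WithLp.toLp_zero]
        _ = F k := by
            rw [Finset.sum_ite_eq' (Finset.range (m + m + 1)) m fun _ => F k]
            exact if_pos (Finset.mem_range.mpr (by omega))
    rw [show (f k : EuclideanSpace ℂ (Fin n)) = F k from rfl, ← hexp, hS]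
  refine ⟨part1, Finset.image
    (fun p : Fin m × Fin n => (lp.single 2 (p.1 : ℕ)
      (EuclideanSpace.single p.2 (1 : ℂ)) : Hp n)) Finset.univ, ?_, ?_⟩
  · refine le_trans Finset.card_image_le ?_
    rw [Finset.card_univ]
    simp [Nat.mul_comm]
  · intro f hf
    have hv := part1 f hf
    have hrepr : f = ∑ p : Fin m × Fin n,
        ((f (p.1 : ℕ) : EuclideanSpace ℂ (Fin n)) p.2) •
          (lp.single 2 (p.1 : ℕ) (EuclideanSpace.single p.2 (1 : ℂ)) : Hp n) := by
      apply lp.ext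
      funext k
      rw [lp.coeFn_sum, Finset.sum_apply]
      simp only [lp.coeFn_smul, Pi.smul_apply, Stmt6Aux.single_apply']
      by_cases hk : k < m
      · rw [Fintype.sum_prod_type]
        rw [Finset.sum_eq_single (⟨k, hk⟩ : Fin m)]
        · have hthis : ∀ b : Fin n,
              (if k = ((⟨k, hk⟩ : Fin m) : ℕ) then EuclideanSpace.single b (1 : ℂ) else 0)
                = EuclideanSpace.single b (1 : ℂ) := fun b => if_pos rfl
          simp only [hthis]
          exact (Stmt6Aux.basis_expand _).symm
        · intro a _ ha
          refine Finset.sum_eq_zero fun b _ => ?_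
          rw [if_neg, smul_zero]
          intro hh
          exact ha (Fin.ext hh.symm)
        · intro h
          exact absurd (Finset.mem_univ _) h
      · rw [hv k (le_of_not_gt hk)]
        refine (Finset.sum_eq_zero fun p _ => ?_).symm
        have := p.1.isLt
        rw [if_neg (by omega), smul_zero]
    rw [hrepr]
    refine Submodule.sum_mem _ fun p _ => ?_
    refine Submodule.smul_mem _ _ (Submodule.subset_span ?_)
    exact Finset.mem_coe.mpr (Finset.mem_image_of_mem _ (Finset.mem_univ p))
end

section
/- Let p_0, …, p_l be ℂⁿ-valued polynomials with degrees d_0 ≤ d_1 ≤ … ≤ d_l, which are linearly independent and such that for every j ≥ 0 the polynomials among them of degree at most j span the space of all polynomials of degree at most j in their span. For μ ∈ ℂ define q_k^μ(λ) = μ^{d_k} p_k(λ/μ) for μ ≠ 0 (a polynomial in λ whose coefficients are polynomial in μ, so defined for all μ ∈ ℂ), and let A(μ) = (⟨q_i^μ, q_j^μ⟩_{H₊})_{0 ≤ i,j ≤ l} be the Gram matrix. Then the entries of A(μ) are polynomials in μ and \overline{μ}, and det A(0) ≠ 0. -/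
open scoped InnerProductSpace

/-- Core lemma: the leading coefficients of the basis members of a fixed degree `j`
are linearly independent. -/
lemma lead_indep {n l : ℕ} {a : Fin (l + 1) → ℕ → EuclideanSpace ℂ (Fin n)}
    {d : Fin (l + 1) → ℕ}
    (hdeg : ∀ k j, d k < j → a k j = 0)
    (hli : LinearIndependent ℂ a)
    (hfilt : ∀ j : ℕ, ∀ v ∈ Submodule.span ℂ (Set.range a),
      (∀ t : ℕ, j < t → v t = 0) → v ∈ Submodule.span ℂ (a '' {k | d k ≤ j}))
    (j : ℕ) (g : Fin (l + 1) → ℂ)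
    (hg : ∑ i ∈ Finset.univ.filter (fun i => d i = j), g i • a i (d i) = 0) :
    ∀ i, d i = j → g i = 0 := by
  classical
  set S : Finset (Fin (l + 1)) := Finset.univ.filter (fun i => d i = j) with hS
  set v : ℕ → EuclideanSpace ℂ (Fin n) := ∑ i ∈ S, g i • a i with hv
  have hvt : ∀ t, j ≤ t → v t = 0 := by
    intro t ht
    rcases eq_or_lt_of_le ht with h | h
    · have : v t = ∑ i ∈ S, g i • a i (d i) := by
        rw [hv, Finset.sum_apply]
        refine Finset.sum_congr rfl fun i hi => ?_
        have hdi : d i = j := (Finset.mem_filter.mp hi).2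
        rw [Pi.smul_apply, hdi, ← h]
      rw [this, hg]
    · rw [hv, Finset.sum_apply]
      refine Finset.sum_eq_zero fun i hi => ?_
      have hdi : d i = j := (Finset.mem_filter.mp hi).2
      rw [Pi.smul_apply, hdeg i t (by omega), smul_zero]
  rcases Nat.eq_zero_or_pos j with hj | hj
  · -- j = 0 : v vanishes identically
    have hv0 : v = 0 := by
      funext t
      exact hvt t (by omega)
    have := linearIndependent_iff'.mp hli S g (by rw [← hv, hv0])
    intro i hi
    exact this i (Finset.mem_filter.mpr ⟨Finset.mem_univ i, hi⟩)
  · obtain ⟨m, rfl⟩ : ∃ m, j = m + 1 := ⟨j - 1, by omega⟩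
    have hmem : v ∈ Submodule.span ℂ (Set.range a) := by
      rw [hv]
      exact Submodule.sum_mem _ fun i _ =>
        Submodule.smul_mem _ _ (Submodule.subset_span (Set.mem_range_self i))
    have hsp := hfilt m v hmem (fun t ht => hvt t (by omega))
    obtain ⟨f, hfsup, hfv⟩ := (Finsupp.mem_span_image_iff_linearCombination ℂ).mp hsp
    -- v = ∑ i, f i • a i
    have eq1 : v = ∑ i, f i • a i := by
      rw [← hfv, Finsupp.linearCombination_apply, Finsupp.sum_fintype]
      intro i; exact zero_smul _ _
    have eq2 : v = ∑ i, (if d i = m + 1 then g i else 0) • a i := by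
      rw [hv, hS, Finset.sum_filter]
      refine Finset.sum_congr rfl fun i _ => ?_
      split <;> simp
    have key : ∑ i, ((if d i = m + 1 then g i else 0) - f i) • a i = 0 := by
      simp only [sub_smul, Finset.sum_sub_distrib, ← eq1, ← eq2, sub_self]
    have hall := Fintype.linearIndependent_iff.mp hli _ key
    intro i hi
    have hfi : f i = 0 := by
      by_contra hne
      have : i ∈ f.support := Finsupp.mem_support_iff.mpr hne
      have := (Finsupp.mem_supported ℂ f).mp hfsup this
      simp only [Set.mem_setOf_eq] at this
      omega
    have := hall i
    rw [hi, if_pos rfl, hfi, sub_zero] at this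
    exact this

/-- For polynomials p_0,…,p_l (given by coefficient sequences a_k of degrees d_k,
nondecreasing) which are linearly independent and such that their members of degree ≤ j
span all polynomials of degree ≤ j in their span, the Gram matrix A(μ) of the
renormalized deformations q_k^μ(λ) = μ^{d_k} p_k(λ/μ) has entries polynomial in μ and
conj(μ), and det A(0) ≠ 0. -/
theorem stmt12 {n l : ℕ} (a : Fin (l + 1) → ℕ → EuclideanSpace ℂ (Fin n))
    (d : Fin (l + 1) → ℕ)
    (hdeg : ∀ k j, d k < j → a k j = 0)
    (hlead : ∀ k, a k (d k) ≠ 0)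
    (hmono : Monotone d)
    (hli : LinearIndependent ℂ a)
    (hfilt : ∀ j : ℕ, ∀ v ∈ Submodule.span ℂ (Set.range a),
      (∀ t : ℕ, j < t → v t = 0) → v ∈ Submodule.span ℂ (a '' {k | d k ≤ j}))
    (N : ℕ) (hN : ∀ k, d k ≤ N)
    (qc : Fin (l + 1) → ℂ → ℕ → EuclideanSpace ℂ (Fin n))
    (hqc : ∀ k μ j, qc k μ j = if j ≤ d k then μ ^ (d k - j) • a k j else 0)
    (A : ℂ → Matrix (Fin (l + 1)) (Fin (l + 1)) ℂ)
    (hA : ∀ μ i j, A μ i j = ∑ t ∈ Finset.range (N + 1), ⟪qc i μ t, qc j μ t⟫_ℂ) :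
    (∀ i j, ∃ co : ℕ → ℕ → ℂ, ∀ μ : ℂ, A μ i j =
      ∑ s ∈ Finset.range (N + 1), ∑ t ∈ Finset.range (N + 1),
        co s t * μ ^ s * (starRingEnd ℂ μ) ^ t) ∧
    (A 0).det ≠ 0 := by
  classical
  constructor
  · -- polynomiality
    intro i j
    refine ⟨fun s t => ∑ u ∈ Finset.range (N + 1),
      if u ≤ d i ∧ u ≤ d j ∧ s = d j - u ∧ t = d i - u then ⟪a i u, a j u⟫_ℂ else 0, ?_⟩
    intro μ
    rw [hA]
    have key : ∀ u ∈ Finset.range (N + 1), ⟪qc i μ u, qc j μ u⟫_ℂ =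
        ∑ s ∈ Finset.range (N + 1), ∑ t ∈ Finset.range (N + 1),
          (if u ≤ d i ∧ u ≤ d j ∧ s = d j - u ∧ t = d i - u then ⟪a i u, a j u⟫_ℂ else 0)
            * μ ^ s * (starRingEnd ℂ μ) ^ t := by
      intro u _
      rw [hqc, hqc]
      by_cases h1 : u ≤ d i
      · by_cases h2 : u ≤ d j
        · rw [if_pos h1, if_pos h2]
          rw [Finset.sum_eq_single_of_mem (d j - u)
            (Finset.mem_range.mpr (by have := hN j; omega))]
          · rw [Finset.sum_eq_single_of_mem (d i - u)
              (Finset.mem_range.mpr (by have := hN i; omega))]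
            · rw [if_pos ⟨h1, h2, rfl, rfl⟩, inner_smul_left, inner_smul_right, map_pow]
              ring
            · intro t _ ht
              rw [if_neg (by tauto), zero_mul, zero_mul]
          · intro s _ hs
            refine Finset.sum_eq_zero fun t _ => ?_
            rw [if_neg (by tauto), zero_mul, zero_mul]
        · rw [if_neg h2, inner_zero_right]
          symm
          refine Finset.sum_eq_zero fun s _ => Finset.sum_eq_zero fun t _ => ?_
          rw [if_neg (by tauto), zero_mul, zero_mul]
      · rw [if_neg h1, inner_zero_left]
        symm
        refine Finset.sum_eq_zero fun s _ => Finset.sum_eq_zero fun t _ => ?_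
        rw [if_neg (by tauto), zero_mul, zero_mul]
    rw [Finset.sum_congr rfl key]
    simp only [Finset.sum_mul]
    rw [Finset.sum_comm]
    exact Finset.sum_congr rfl fun s _ => Finset.sum_comm
  · -- det A 0 ≠ 0
    intro hdet
    obtain ⟨v, hvne, hmv⟩ := (Matrix.exists_mulVec_eq_zero_iff).mpr hdet
    set w : ℕ → EuclideanSpace ℂ (Fin n) := fun t => ∑ i, v i • qc i 0 t with hw
    have h0 : ∑ t ∈ Finset.range (N + 1), ⟪w t, w t⟫_ℂ = 0 := by
      have heq : ∑ t ∈ Finset.range (N + 1), ⟪w t, w t⟫_ℂ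
          = ∑ i, (starRingEnd ℂ) (v i) * ((A 0).mulVec v) i := by
        simp only [hw, sum_inner, inner_sum, inner_smul_left, inner_smul_right,
          Matrix.mulVec, dotProduct, hA, Finset.mul_sum, Finset.sum_mul]
        conv_rhs => rw [Finset.sum_comm]
        rw [Finset.sum_comm]
        refine Finset.sum_congr rfl fun i _ => ?_
        rw [Finset.sum_comm]
        exact Finset.sum_congr rfl fun j _ => Finset.sum_congr rfl fun t _ => by ring
      rw [heq, hmv]
      simp
    have hwt : ∀ t ∈ Finset.range (N + 1), w t = 0 := by
      have h1 : ∑ t ∈ Finset.range (N + 1), (‖w t‖ ^ 2 : ℝ) = 0 := by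
        have h2 : (∑ t ∈ Finset.range (N + 1), ⟪w t, w t⟫_ℂ).re = 0 := by rw [h0]; simp
        rw [Complex.re_sum] at h2
        rw [← h2]
        refine Finset.sum_congr rfl fun t _ => ?_
        rw [← inner_self_eq_norm_sq (𝕜 := ℂ) (w t)]
        rfl
      intro t ht
      have := (Finset.sum_eq_zero_iff_of_nonneg (fun t _ => sq_nonneg _)).mp h1 t ht
      have : ‖w t‖ = 0 := by nlinarith [norm_nonneg (w t)]
      exact norm_eq_zero.mp this
    -- evaluate qc at μ = 0
    have hqc0 : ∀ i t, qc i 0 t = if d i = t then a i (d i) else 0 := by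
      intro i t
      rw [hqc]
      rcases lt_trichotomy t (d i) with h | h | h
      · rw [if_pos (le_of_lt h), if_neg (by omega), zero_pow (by omega), zero_smul]
      · rw [if_pos (le_of_eq h), if_pos h.symm, h, Nat.sub_self, pow_zero, one_smul]
      · rw [if_neg (by omega), if_neg (by omega)]
    have hvz : ∀ k, v k = 0 := by
      intro k
      have hdk : d k ∈ Finset.range (N + 1) := Finset.mem_range.mpr (by have := hN k; omega)
      have hrel : ∑ i ∈ Finset.univ.filter (fun i => d i = d k), v i • a i (d i) = 0 := by
        have h2 := hwt (d k) hdk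
        rw [hw] at h2
        simp only [hqc0] at h2
        rw [Finset.sum_filter]
        refine Eq.trans ?_ h2
        refine Finset.sum_congr rfl fun i _ => ?_
        by_cases hc : d i = d k <;> simp [hc]
      exact lead_indep hdeg hli hfilt (d k) v hrel k rfl
    exact hvne (funext hvz)
end
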